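/- A 1-cut search tree on a tree G is exactly a rooting of G: if T is a search tree on G in which every node v satisfies |∂(T_v)| ≤ 1, then for every non-root node v, the parent of v in T is adjacent to v in G. -/

import Mathlib

open SimpleGraph

variable {V : Type*}

/-- Reachability within a vertex set `S`. -/
def reachIn (G : SimpleGraph V) (S : Set V) : V → V → Prop :=
  Relation.ReflTransGen (fun x y => x ∈ S ∧ y ∈ S ∧ G.Adj x y)

/-- The connected component of `v` inside the vertex set `S`. -/
def compIn (G : SimpleGraph V) (S : Set V) (v : V) : Set V :=
  {u | reachIn G S v u}

/-- `IsSearchTree G par S r`: the parent map `par` describes a search tree with root `r`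
on the part of `G` induced by `S`, built recursively: the root `r` is chosen, and each
connected component of `S \ {r}` carries a search tree whose root is a child of `r`. -/
inductive IsSearchTree (G : SimpleGraph V) (par : V → Option V) : Set V → V → Prop where
  | node (S : Set V) (r : V) (ρ : V → V) (hr : r ∈ S)
      (hρ : ∀ v ∈ S, v ≠ r → par (ρ v) = some r)
      (h : ∀ v ∈ S, v ≠ r → IsSearchTree G par (compIn G (S \ {r}) v) (ρ v)) :
      IsSearchTree G par S r

/-- `isAnc par a v`: `a` is an ancestor of `v` (reflexively). -/
def isAnc (par : V → Option V) (a v : V) : Prop :=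
  Relation.ReflTransGen (fun x y => par x = some y) v a

/-- The subtree rooted at `v`: all descendants of `v` (including `v`). -/
def subtree (par : V → Option V) (v : V) : Set V := {u | isAnc par v u}

/-- The outer boundary `∂(T_v)` of the subtree rooted at `v`. -/
def bdry (G : SimpleGraph V) (par : V → Option V) (v : V) : Set V :=
  {x | x ∉ subtree par v ∧ ∃ u ∈ subtree par v, G.Adj x u}

/-- A search tree is 2-cut if every subtree boundary has size at most 2. -/
def TwoCut (G : SimpleGraph V) (par : V → Option V) : Prop :=
  ∀ v, (bdry G par v).ncard ≤ 2

open Classical in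
/-- The STT rotation of `v` with its parent `p`: `p` becomes a child of `v`, `v` takes the
former parent of `p`, and any child `c` of `v` with `p ∈ ∂(T_c)` is reattached to `p`. -/
noncomputable def rotate (G : SimpleGraph V) (par : V → Option V) (v p : V) :
    V → Option V := fun x =>
  if x = v then par p
  else if x = p then some v
  else if par x = some v ∧ p ∈ bdry G par x then some p
  else par x

/-- A splay step at `x`: a single rotation if `x` has no grandparent; a ZIG-ZAG
(two rotations at `x`) if `x` is a separator; a ZIG-ZIG (rotation at the parent,
then at `x`) otherwise. -/
noncomputable def splayStep (G : SimpleGraph V) (par : V → Option V) (x : V) :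
    V → Option V :=
  match par x with
  | none => par
  | some p =>
    match par p with
    | none => rotate G par x p
    | some g =>
      if (bdry G par x).ncard = 2 then
        rotate G (rotate G par x p) x g
      else
        rotate G (rotate G par p g) x p

/- ### Auxiliary lemmas -/

lemma reachIn_symm {G : SimpleGraph V} {S : Set V} {x y : V}
    (h : reachIn G S x y) : reachIn G S y x :=
  by
    have : Std.Symm (fun x y : V => x ∈ S ∧ y ∈ S ∧ G.Adj x y) :=
      ⟨fun _ _ hab => ⟨hab.2.1, hab.1, hab.2.2.symm⟩⟩
    exact (Relation.ReflTransGen.symmetric).symm _ _ h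

lemma mem_compIn_self (G : SimpleGraph V) (S : Set V) (v : V) :
    v ∈ compIn G S v := Relation.ReflTransGen.refl

lemma compIn_subset {G : SimpleGraph V} {S : Set V} {v : V} (hv : v ∈ S) :
    compIn G S v ⊆ S := by
  intro u hu
  induction hu with
  | refl => exact hv
  | tail _ hbc _ => exact hbc.2.1

lemma reachIn_compIn {G : SimpleGraph V} {S : Set V} {v x : V}
    (h : reachIn G S v x) : reachIn G (compIn G S v) v x := by
  induction h with
  | refl => exact Relation.ReflTransGen.refl
  | tail hab hbc ih =>
      exact Relation.ReflTransGen.tail ih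
        ⟨hab, Relation.ReflTransGen.tail hab hbc, hbc.2.2⟩

lemma compIn_conn {G : SimpleGraph V} {S : Set V} {v x y : V}
    (hx : x ∈ compIn G S v) (hy : y ∈ compIn G S v) :
    reachIn G (compIn G S v) x y :=
  (reachIn_symm (reachIn_compIn hx)).trans (reachIn_compIn hy)

/-- If `S` is connected and `v ≠ r` are in `S`, then some vertex of the component of `v`
in `S \ {r}` is adjacent to `r`. -/
lemma exists_adj_comp {G : SimpleGraph V} {S : Set V}
    (hconn : ∀ x ∈ S, ∀ y ∈ S, reachIn G S x y) {r v : V}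
    (hr : r ∈ S) (hv : v ∈ S) (hvr : v ≠ r) :
    ∃ x ∈ compIn G (S \ {r}) v, G.Adj r x := by
  have hreach : reachIn G S v r := hconn v hv r hr
  suffices H : ∀ y, reachIn G S v y →
      (∃ x ∈ compIn G (S \ {r}) v, G.Adj r x) ∨
      (y ≠ r ∧ y ∈ compIn G (S \ {r}) v) by
    rcases H r hreach with h | h
    · exact h
    · exact absurd rfl h.1
  intro y hy
  induction hy with
  | refl => exact Or.inr ⟨hvr, mem_compIn_self G _ v⟩
  | @tail b c hab hbc ih =>
      rcases ih with h | ⟨hbr, hbC⟩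
      · exact Or.inl h
      · by_cases hcr : c = r
        · exact Or.inl ⟨b, hbC, by rw [hcr] at hbc; exact hbc.2.2.symm⟩
        · exact Or.inr ⟨hcr, Relation.ReflTransGen.tail hbC
            ⟨⟨hbc.1, hbr⟩, ⟨hbc.2.1, hcr⟩, hbc.2.2⟩⟩

lemma root_mem {G : SimpleGraph V} {par : V → Option V} {S : Set V} {r : V}
    (hST : IsSearchTree G par S r) : r ∈ S := by
  cases hST with
  | node _ _ _ hr _ _ => exact hr

/-- Every vertex of `S` is a descendant of the root. -/
lemma subtree_covers {G : SimpleGraph V} {par : V → Option V} {S : Set V} {r : V}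
    (hST : IsSearchTree G par S r) : ∀ u ∈ S, isAnc par r u := by
  induction hST with
  | node S r ρ hr hρ h ih =>
      intro u hu
      by_cases hur : u = r
      · subst hur; exact Relation.ReflTransGen.refl
      · exact Relation.ReflTransGen.tail
          (ih u hu hur u (mem_compIn_self G _ u)) (hρ u hu hur)

/-- The parent of a non-root vertex of `S` is either the root or lies in the vertex's
own component of `S \ {r}`. -/
lemma parent_mem {G : SimpleGraph V} {par : V → Option V} {S : Set V} {r : V}
    (hST : IsSearchTree G par S r) :
    ∀ u ∈ S, u ≠ r → ∃ w, par u = some w ∧ (w = r ∨ w ∈ compIn G (S \ {r}) u) := by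
  induction hST with
  | node S r ρ hr hρ h ih =>
      intro u hu hur
      by_cases huρ : u = ρ u
      · exact ⟨r, by rw [huρ]; exact hρ u hu hur, Or.inl rfl⟩
      · obtain ⟨w, hw, hcase⟩ := ih u hu hur u (mem_compIn_self G _ u) huρ
        refine ⟨w, hw, Or.inr ?_⟩
        rcases hcase with h1 | h1
        · exact h1 ▸ root_mem (h u hu hur)
        · have hm : u ∈ compIn G (S \ {r}) u \ {ρ u} := ⟨mem_compIn_self G _ u, huρ⟩
          exact (compIn_subset hm h1).1

/-- If a set is closed under taking the child of any of its members, then the subtree of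
any of its members is contained in it. -/
lemma subtree_sub {par : V → Option V} {C : Set V} {t : V} (ht : t ∈ C)
    (hCL : ∀ u w, par u = some w → w ∈ C → u ∈ C) :
    subtree par t ⊆ C := by
  intro u hu
  induction hu using Relation.ReflTransGen.head_induction_on with
  | refl => exact ht
  | head hstep _ ih => exact hCL _ _ hstep ih

/-- Propagation of the "children stay inside" closure property to components. -/
lemma CL_prop {G : SimpleGraph V} {par : V → Option V} {S : Set V} {r : V}
    (hST : IsSearchTree G par S r)
    (hCL : ∀ u w, par u = some w → w ∈ S → u ∈ S ∧ u ≠ r)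
    {v : V} (hv : v ∈ S) (hvr : v ≠ r) :
    ∀ u w, par u = some w → w ∈ compIn G (S \ {r}) v →
      u ∈ compIn G (S \ {r}) v ∧ par u ≠ some r := by
  intro u w hu hw
  have hmv : v ∈ S \ {r} := ⟨hv, hvr⟩
  have hwS : w ∈ S \ {r} := compIn_subset hmv hw
  obtain ⟨huS, hur⟩ := hCL u w hu hwS.1
  obtain ⟨w', hw', hcase⟩ := parent_mem hST u huS hur
  rw [hu] at hw'
  have hww : w = w' := Option.some.inj hw'
  subst hww
  rcases hcase with h1 | h1
  · exact absurd h1 hwS.2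
  · refine ⟨Relation.ReflTransGen.trans hw (reachIn_symm h1), fun hc => ?_⟩
    rw [hu] at hc
    exact hwS.2 (Option.some.inj hc)

lemma reachIn_univ_of_walk {G : SimpleGraph V} {x y : V} (w : G.Walk x y) :
    reachIn G Set.univ x y := by
  induction w with
  | nil => exact Relation.ReflTransGen.refl
  | cons h _ ih => exact Relation.ReflTransGen.head ⟨trivial, trivial, h⟩ ih

/-- Main induction for the theorem. -/
lemma oneCut_main [Fintype V] (G : SimpleGraph V) (par : V → Option V)
    (h1 : ∀ x, (bdry G par x).ncard ≤ 1) {S : Set V} {r : V}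
    (hST : IsSearchTree G par S r) :
    (∀ x ∈ S, ∀ y ∈ S, reachIn G S x y) →
    (∀ u w, par u = some w → w ∈ S → u ∈ S ∧ u ≠ r) →
    ∀ v ∈ S, v ≠ r → ∀ p, par v = some p → G.Adj v p := by
  induction hST with
  | node S r ρ hr hρ h ih =>
    intro hconn hCL v hv hvr p hp
    have hSTfull : IsSearchTree G par S r := IsSearchTree.node S r ρ hr hρ h
    have hvS : v ∈ S \ {r} := ⟨hv, hvr⟩
    have hCsub : compIn G (S \ {r}) v ⊆ S \ {r} := compIn_subset hvS
    have hSTC : IsSearchTree G par (compIn G (S \ {r}) v) (ρ v) := h v hv hvr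
    have hρvC : ρ v ∈ compIn G (S \ {r}) v := root_mem hSTC
    have hconnC : ∀ x ∈ compIn G (S \ {r}) v, ∀ y ∈ compIn G (S \ {r}) v,
        reachIn G (compIn G (S \ {r}) v) x y := fun x hx y hy => compIn_conn hx hy
    have hCLC := CL_prop hSTfull hCL hv hvr
    have hCLC' : ∀ u w, par u = some w → w ∈ compIn G (S \ {r}) v →
        u ∈ compIn G (S \ {r}) v ∧ u ≠ ρ v := by
      intro u w h1' h2'
      obtain ⟨hu, hne⟩ := hCLC u w h1' h2'
      exact ⟨hu, fun he => hne (he ▸ hρ v hv hvr)⟩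
    by_cases hvρ : v = ρ v
    · -- v is the root of its component; its parent is r
      have hpr : p = r := by
        have h2 := hρ v hv hvr
        rw [← hvρ, hp] at h2
        exact Option.some.inj h2
      rw [hpr]
      have hSTCv : IsSearchTree G par (compIn G (S \ {r}) v) v := by
        have := hSTC; rwa [← hvρ] at this
      have hsub1 : subtree par v ⊆ compIn G (S \ {r}) v :=
        subtree_sub (mem_compIn_self G _ v) (fun u w a b => (hCLC' u w a b).1)
      have hsub2 := subtree_covers hSTCv
      obtain ⟨x, hxC, hadj⟩ := exists_adj_comp hconn hr hv hvr
      have hrC : r ∉ compIn G (S \ {r}) v := fun hh => (hCsub hh).2 rfl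
      suffices hxv : x = v by exact hxv ▸ hadj.symm
      by_contra hxv
      cases hSTCv with
      | node _ _ ρ' hr' hρ' h' =>
        have hSTCv' : IsSearchTree G par (compIn G (S \ {r}) v) v :=
          IsSearchTree.node _ v ρ' hr' hρ' h'
        have hST' : IsSearchTree G par
            (compIn G (compIn G (S \ {r}) v \ {v}) x) (ρ' x) := h' x hxC hxv
        have hC'sub : compIn G (compIn G (S \ {r}) v \ {v}) x ⊆
            compIn G (S \ {r}) v \ {v} := compIn_subset ⟨hxC, hxv⟩
        have hCLCv : ∀ u w, par u = some w → w ∈ compIn G (S \ {r}) v →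
            u ∈ compIn G (S \ {r}) v ∧ u ≠ v := by
          intro u w a b
          obtain ⟨h3, h4⟩ := hCLC' u w a b
          exact ⟨h3, fun he => h4 (he.trans hvρ)⟩
        have hCL' := CL_prop hSTCv' hCLCv hxC hxv
        have hroot' : ρ' x ∈ compIn G (compIn G (S \ {r}) v \ {v}) x := root_mem hST'
        have hρ'x : par (ρ' x) = some v := hρ' x hxC hxv
        have hCL'' : ∀ u w, par u = some w →
            w ∈ compIn G (compIn G (S \ {r}) v \ {v}) x →
            u ∈ compIn G (compIn G (S \ {r}) v \ {v}) x := by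
          intro u w a b
          exact (hCL' u w a b).1
        have hsubtree' : subtree par (ρ' x) ⊆
            compIn G (compIn G (S \ {r}) v \ {v}) x := subtree_sub hroot' hCL''
        have hcov' := subtree_covers hST'
        have hrB : r ∈ bdry G par (ρ' x) := by
          refine ⟨fun hh => hrC (hC'sub (hsubtree' hh)).1, x, ?_, hadj⟩
          exact hcov' x (mem_compIn_self G _ x)
        obtain ⟨y, hyC', hady⟩ := exists_adj_comp hconnC (mem_compIn_self G _ v) hxC hxv
        have hvB : v ∈ bdry G par (ρ' x) :=
          ⟨fun hh => (hC'sub (hsubtree' hh)).2 rfl, y, hcov' y hyC', hady⟩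
        have h2 : 1 < (bdry G par (ρ' x)).ncard := by
          rw [Set.one_lt_ncard_iff (Set.toFinite _)]
          exact ⟨r, v, hrB, hvB, fun he => hvr he.symm⟩
        exact absurd (h1 (ρ' x)) (by omega)
    · exact ih v hv hvr hconnC hCLC' v (mem_compIn_self G _ v) hvρ p hp

/-- A 1-cut search tree on a tree `G` is a rooting of `G`: if every node
`v` satisfies `|∂(T_v)| ≤ 1`, then every non-root node is adjacent in `G` to its
parent. -/
theorem oneCut_is_rooting [Fintype V] (G : SimpleGraph V) (hG : G.IsTree)
    (par : V → Option V) (r : V) (hroot : par r = none)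
    (hT : IsSearchTree G par Set.univ r)
    (h1 : ∀ x, (bdry G par x).ncard ≤ 1)
    (v p : V) (hvp : par v = some p) :
    G.Adj v p := by
  have hconn : ∀ x ∈ (Set.univ : Set V), ∀ y ∈ (Set.univ : Set V),
      reachIn G Set.univ x y := by
    intro x _ y _
    exact reachIn_univ_of_walk (hG.isConnected.preconnected x y).some
  have hCL : ∀ u w, par u = some w → w ∈ (Set.univ : Set V) →
      u ∈ (Set.univ : Set V) ∧ u ≠ r := by
    intro u w hu _
    refine ⟨trivial, fun he => ?_⟩
    rw [he, hroot] at hu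
    cases hu
  have hvr : v ≠ r := by
    intro he
    rw [he, hroot] at hvp
    cases hvp
  exact oneCut_main G par h1 hT hconn hCL v trivial hvr p hvp
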